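/- Let A be an invertible n×n real matrix and let ξ ∈ ℝⁿ be a nonzero eigenvector of the forward Cauchy–Green tensor C^f = Aᵀ A corresponding to its largest eigenvalue λ_max. Then there exists a nonzero eigenvector η of the backward Cauchy–Green tensor C^b = (A⁻¹)ᵀ A⁻¹ corresponding to its smallest eigenvalue such that A((span ξ)^⊥) = (span η)^⊥. (Pointwise tangent-space version of Theorem 1(i): a forward strain-surface is a backward stretch-surface.) -/

import Mathlib

open Matrix

section Aux

variable {n : ℕ}

lemma aux_mem_spectrum_of_eig {M : Matrix (Fin n) (Fin n) ℝ} {v : Fin n → ℝ} {μ : ℝ}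
    (hv : v ≠ 0) (h : M *ᵥ v = μ • v) : μ ∈ spectrum ℝ M := by
  rw [spectrum.mem_iff]
  intro hunit
  have hdet : IsUnit (algebraMap ℝ (Matrix (Fin n) (Fin n) ℝ) μ - M).det :=
    (Matrix.isUnit_iff_isUnit_det _).mp hunit
  have hzero : (algebraMap ℝ (Matrix (Fin n) (Fin n) ℝ) μ - M) *ᵥ v = 0 := by
    rw [sub_mulVec, Algebra.algebraMap_eq_smul_one, smul_mulVec, one_mulVec, h, sub_self]
  exact hdet.ne_zero (Matrix.exists_mulVec_eq_zero_iff.mp ⟨v, hv, hzero⟩)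

lemma aux_eig_of_mem_spectrum {M : Matrix (Fin n) (Fin n) ℝ} {μ : ℝ}
    (h : μ ∈ spectrum ℝ M) : ∃ v : Fin n → ℝ, v ≠ 0 ∧ M *ᵥ v = μ • v := by
  rw [spectrum.mem_iff] at h
  have hdet : (algebraMap ℝ (Matrix (Fin n) (Fin n) ℝ) μ - M).det = 0 := by
    by_contra hne
    exact h ((Matrix.isUnit_iff_isUnit_det _).mpr (isUnit_iff_ne_zero.mpr hne))
  obtain ⟨v, hv, hzero⟩ := Matrix.exists_mulVec_eq_zero_iff.mpr hdet
  refine ⟨v, hv, ?_⟩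
  rw [sub_mulVec, Algebra.algebraMap_eq_smul_one, smul_mulVec, one_mulVec,
    sub_eq_zero] at hzero
  exact hzero.symm

lemma aux_dot_self_pos {v : Fin n → ℝ} (hv : v ≠ 0) : 0 < v ⬝ᵥ v := by
  rcases lt_or_eq_of_le (Finset.sum_nonneg fun i _ => mul_self_nonneg (v i) :
      (0:ℝ) ≤ v ⬝ᵥ v) with h | h
  · exact h
  · exact absurd (dotProduct_self_eq_zero.mp h.symm) hv

lemma aux_key (A : Matrix (Fin n) (Fin n) ℝ) (x z : Fin n → ℝ) :
    (A *ᵥ x) ⬝ᵥ (A *ᵥ z) = ((Aᵀ * A) *ᵥ x) ⬝ᵥ z := by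
  rw [dotProduct_mulVec, ← mulVec_transpose, mulVec_mulVec]

end Aux

/-- Pointwise tangent-space version of Theorem 1(i): if `ξ ≠ 0` is an eigenvector of the
forward Cauchy–Green tensor `Cᶠ = Aᵀ * A` for its largest eigenvalue `lmax`, then there is a
nonzero eigenvector `η` of the backward Cauchy–Green tensor `Cᵇ = (A⁻¹)ᵀ * A⁻¹` for its
smallest eigenvalue such that `A ((span ξ)ᗮ) = (span η)ᗮ`. -/
theorem forward_strain_surface_is_backward_stretch_surface
    (n : ℕ) (A : Matrix (Fin n) (Fin n) ℝ) (hA : IsUnit A.det)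
    (lmax : ℝ) (hmax : IsGreatest (spectrum ℝ (Aᵀ * A)) lmax)
    (ξ : EuclideanSpace ℝ (Fin n)) (hξ0 : ξ ≠ 0)
    (hξ : Matrix.toEuclideanLin (Aᵀ * A) ξ = lmax • ξ) :
    ∃ (lmin : ℝ) (η : EuclideanSpace ℝ (Fin n)),
      IsLeast (spectrum ℝ ((A⁻¹)ᵀ * A⁻¹)) lmin ∧ η ≠ 0 ∧
      Matrix.toEuclideanLin ((A⁻¹)ᵀ * A⁻¹) η = lmin • η ∧
      Submodule.map (Matrix.toEuclideanLin A) ((ℝ ∙ ξ)ᗮ) = (ℝ ∙ η)ᗮ := by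
  classical
  set e := WithLp.equiv 2 (Fin n → ℝ) with he
  set x : Fin n → ℝ := e ξ with hx
  have hx0 : x ≠ 0 := fun h => hξ0 (by simpa [hx, he] using congrArg e.symm h)
  -- eigen equation in mulVec form
  have hξ' : (Aᵀ * A) *ᵥ x = lmax • x := by
    have := congrArg e hξ
    exact this
  have hAinv : A⁻¹ * A = 1 := Matrix.nonsing_inv_mul A hA
  have hAinv' : A * A⁻¹ = 1 := Matrix.mul_nonsing_inv A hA
  have hAt : IsUnit Aᵀ.det := by rwa [Matrix.det_transpose]
  have hAtinv : Aᵀ⁻¹ * Aᵀ = 1 := Matrix.nonsing_inv_mul Aᵀ hAt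
  have hAtinv' : Aᵀ * Aᵀ⁻¹ = 1 := Matrix.mul_nonsing_inv Aᵀ hAt
  -- key bilinear identity
  have key : ∀ z : Fin n → ℝ, (A *ᵥ x) ⬝ᵥ (A *ᵥ z) = lmax * (x ⬝ᵥ z) := by
    intro z
    rw [aux_key, hξ', smul_dotProduct, smul_eq_mul]
  have hAx0 : A *ᵥ x ≠ 0 := by
    intro h
    apply hx0
    have := congrArg (fun v => A⁻¹ *ᵥ v) h
    simpa [mulVec_mulVec, hAinv] using this
  have hlmax : 0 < lmax := by
    have h1 : 0 < (A *ᵥ x) ⬝ᵥ (A *ᵥ x) := aux_dot_self_pos hAx0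
    have h2 : 0 < x ⬝ᵥ x := aux_dot_self_pos hx0
    have := key x
    nlinarith
  -- eigen equation for the backward tensor
  have heig : ((A⁻¹)ᵀ * A⁻¹) *ᵥ (A *ᵥ x) = lmax⁻¹ • (A *ᵥ x) := by
    have h1 : A *ᵥ x = lmax • (Aᵀ⁻¹ *ᵥ x) := by
      have := congrArg (fun v => Aᵀ⁻¹ *ᵥ v) hξ'
      simp only [mulVec_mulVec] at this
      rw [← Matrix.mul_assoc, hAtinv, Matrix.one_mul, mulVec_smul] at this
      exact this
    rw [Matrix.transpose_nonsing_inv, mulVec_mulVec, Matrix.mul_assoc, hAinv, Matrix.mul_one]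
    rw [h1, smul_smul, inv_mul_cancel₀ (ne_of_gt hlmax), one_smul]
  -- lower bound
  have hlb : ∀ μ ∈ spectrum ℝ ((A⁻¹)ᵀ * A⁻¹), lmax⁻¹ ≤ μ := by
    intro μ hμ
    obtain ⟨w, hw0, hw⟩ := aux_eig_of_mem_spectrum hμ
    have hself : w = μ • ((A * Aᵀ) *ᵥ w) := by
      have hprod : (A * Aᵀ) * (A⁻¹ᵀ * A⁻¹) = 1 := by
        rw [Matrix.transpose_nonsing_inv, Matrix.mul_assoc A Aᵀ, ← Matrix.mul_assoc Aᵀ,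
          hAtinv', Matrix.one_mul, hAinv']
      have := congrArg (fun v => (A * Aᵀ) *ᵥ v) hw
      simp only [mulVec_smul, mulVec_mulVec] at this
      rw [hprod, one_mulVec] at this
      exact this
    have hμ0 : μ ≠ 0 := by
      intro h
      rw [h, zero_smul] at hself
      exact hw0 hself
    have hAAt : (A * Aᵀ) *ᵥ w = μ⁻¹ • w := by
      have h2 := congrArg (fun u => μ⁻¹ • u) hself
      simp only [smul_smul, inv_mul_cancel₀ hμ0, one_smul] at h2
      exact h2.symm
    set v : Fin n → ℝ := Aᵀ *ᵥ w with hv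
    have hv0 : v ≠ 0 := by
      intro h
      apply hw0
      have := congrArg (fun u => Aᵀ⁻¹ *ᵥ u) h
      simpa [hv, mulVec_mulVec, hAtinv] using this
    have hveig : (Aᵀ * A) *ᵥ v = μ⁻¹ • v := by
      rw [hv, mulVec_mulVec, Matrix.mul_assoc, ← mulVec_mulVec, hAAt, mulVec_smul]
    have hmem : μ⁻¹ ∈ spectrum ℝ (Aᵀ * A) := aux_mem_spectrum_of_eig hv0 hveig
    have hle : μ⁻¹ ≤ lmax := hmax.2 hmem
    have hpos : 0 < μ⁻¹ := by
      have h1 : 0 < (A *ᵥ v) ⬝ᵥ (A *ᵥ v) := by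
        apply aux_dot_self_pos
        intro h
        apply hv0
        have := congrArg (fun u => A⁻¹ *ᵥ u) h
        simpa [mulVec_mulVec, hAinv] using this
      have h2 : 0 < v ⬝ᵥ v := aux_dot_self_pos hv0
      have h3 : (A *ᵥ v) ⬝ᵥ (A *ᵥ v) = μ⁻¹ * (v ⬝ᵥ v) := by
        rw [aux_key, hveig, smul_dotProduct, smul_eq_mul]
      nlinarith
    calc lmax⁻¹ ≤ (μ⁻¹)⁻¹ := by
          apply inv_anti₀ hpos hle
      _ = μ := inv_inv μ
  -- define η
  refine ⟨lmax⁻¹, e.symm (A *ᵥ x), ⟨aux_mem_spectrum_of_eig hAx0 heig, hlb⟩, ?_, ?_, ?_⟩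
  · intro h
    exact hAx0 (by simpa [he] using congrArg e h)
  · rw [Matrix.toEuclideanLin_apply]
    simp only [he, WithLp.equiv_symm_apply, WithLp.ofLp_toLp]
    rw [heig]
    simp
  · -- the submodule equality
    have hinner : ∀ a b : Fin n → ℝ, (inner ℝ (e.symm a) (e.symm b) : ℝ) = a ⬝ᵥ b := by
      intro a b
      simp [PiLp.inner_apply, dotProduct, he, mul_comm]
    ext w
    simp only [Submodule.mem_map]
    constructor
    · rintro ⟨v, hv, rfl⟩
      rw [Submodule.mem_orthogonal_singleton_iff_inner_left] at hv ⊢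
      rw [show ξ = e.symm x from (e.symm_apply_apply ξ).symm,
        show v = e.symm (e v) from (e.symm_apply_apply v).symm, hinner] at hv
      rw [show (Matrix.toEuclideanLin A) v = e.symm (A *ᵥ e v) from rfl, hinner]
      rw [dotProduct_comm, key, dotProduct_comm, hv, mul_zero]
    · intro hw
      rw [Submodule.mem_orthogonal_singleton_iff_inner_left,
        show w = e.symm (e w) from (e.symm_apply_apply w).symm, hinner] at hw
      refine ⟨e.symm (A⁻¹ *ᵥ e w), ?_, ?_⟩
      · rw [Submodule.mem_orthogonal_singleton_iff_inner_left,
          show ξ = e.symm x from (e.symm_apply_apply ξ).symm, hinner]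
        have hk := key (A⁻¹ *ᵥ e w)
        rw [mulVec_mulVec, hAinv', one_mulVec] at hk
        have h1 : x ⬝ᵥ (A⁻¹ *ᵥ e w) = lmax⁻¹ * ((A *ᵥ x) ⬝ᵥ (e w)) := by
          rw [hk, ← mul_assoc, inv_mul_cancel₀ (ne_of_gt hlmax), one_mul]
        rw [dotProduct_comm, h1, dotProduct_comm, hw, mul_zero]
      · rw [show (Matrix.toEuclideanLin A) (e.symm (A⁻¹ *ᵥ e w)) =
          e.symm (A *ᵥ e (e.symm (A⁻¹ *ᵥ e w))) from rfl]
        simp [mulVec_mulVec, hAinv', one_mulVec]
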